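/- Let K/F be a finite Galois extension with group G, E an elliptic curve over F, and V = E(K) ⊗ ℚ viewed as a ℚ[G]-module. Then the kernel of the projection V → V^new (where V^new is the sum of the isotypic components of faithful irreducible ℚ-representations of G) equals the ℚ-span of the subgroups E(L) for F ⊆ L ⊊ K with L/F Galois; consequently E(K/F)^{G-new} ⊗ ℚ ≅ V^new. -/

import Mathlib

universe u v

namespace Stmt12Aux

variable {V : Type u} [AddCommGroup V] [Module ℚ V] {G : Type v} [Group G]

/-- upgrade a `ℚ`-representation to a `ULift ℚ`-representation -/
noncomputable def rhoK (ρ : Representation ℚ G V) : Representation (ULift.{v} ℚ) G V where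
  toFun g :=
    { toFun := ρ g
      map_add' := (ρ g).map_add
      map_smul' := fun c x => (ρ g).map_smul c.down x }
  map_one' := by ext x; show ρ 1 x = x; rw [ρ.map_one]; rfl
  map_mul' g h := by ext x; show ρ (g * h) x = ρ g (ρ h x); rw [ρ.map_mul]; rfl

noncomputable instance : SMulCommClass (ULift.{v} ℚ) (ULift.{v} ℚ) V :=
  ⟨fun a b x => smul_comm a.down b.down x⟩

noncomputable def psi (ρ : Representation ℚ G V) :
    MonoidAlgebra (ULift.{v} ℚ) G →+* Module.End (ULift.{v} ℚ) V :=
  (MonoidAlgebra.lift (ULift.{v} ℚ) (Module.End (ULift.{v} ℚ) V) G (rhoK ρ)).toRingHom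

/-- type synonym for `V` carrying the `MonoidAlgebra (ULift ℚ) G`-module structure -/
def MA (_ρ : Representation ℚ G V) : Type u := V

variable (ρ : Representation ℚ G V)

instance : AddCommGroup (MA ρ) := inferInstanceAs (AddCommGroup V)
instance : Module ℚ (MA ρ) := inferInstanceAs (Module ℚ V)
noncomputable instance : Module (MonoidAlgebra (ULift.{v} ℚ) G) (MA ρ) :=
  Module.compHom V (psi ρ)

lemma smul_def (a : MonoidAlgebra (ULift.{v} ℚ) G) (x : MA ρ) :
    a • x = psi ρ a (x : V) := rfl

lemma single_smul (g : G) (c : ULift.{v} ℚ) (x : MA ρ) :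
    (MonoidAlgebra.single g c) • x = (c.down • ρ g (x : V) : V) := by
  rw [smul_def]
  show (MonoidAlgebra.lift (ULift.{v} ℚ) (Module.End (ULift.{v} ℚ) V) G (rhoK ρ))
      (MonoidAlgebra.single g c) x = c.down • ρ g (x : V)
  rw [MonoidAlgebra.lift_single]
  rfl

lemma rho_smul (g : G) (x : MA ρ) :
    (MonoidAlgebra.single g (1 : ULift.{v} ℚ)) • x = (ρ g (x : V) : V) := by
  rw [single_smul]; exact one_smul ℚ _

lemma rat_smul (q : ℚ) (x : MA ρ) :
    (MonoidAlgebra.single (1 : G) (ULift.up q)) • x = (q • (x : V) : V) := by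
  rw [single_smul]
  show q • ρ 1 (x : V) = q • (x : V)
  rw [ρ.map_one]; rfl

/-- a `ℚ`-submodule invariant under the `G`-action, viewed as a module over the group algebra -/
def toA (W : Submodule ℚ V) (hW : ∀ g : G, ∀ x ∈ W, ρ g x ∈ W) :
    Submodule (MonoidAlgebra (ULift.{v} ℚ) G) (MA ρ) where
  carrier := (W : Set V)
  add_mem' := W.add_mem
  zero_mem' := W.zero_mem
  smul_mem' := by
    intro a x hx
    induction a using MonoidAlgebra.induction_linear with
    | zero => rw [zero_smul]; exact W.zero_mem
    | add f g hf hg => rw [add_smul]; exact W.add_mem hf hg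
    | single g c =>
      rw [single_smul]
      exact W.smul_mem _ (hW g x hx)

/-- the underlying `ℚ`-submodule of a group-algebra submodule -/
def toQ (p : Submodule (MonoidAlgebra (ULift.{v} ℚ) G) (MA ρ)) : Submodule ℚ V where
  carrier := (p : Set (MA ρ))
  add_mem' := p.add_mem
  zero_mem' := p.zero_mem
  smul_mem' := by
    intro q x hx
    have := p.smul_mem (MonoidAlgebra.single (1 : G) (ULift.up q)) hx
    exact (rat_smul ρ q x) ▸ this

variable {ρ}

lemma mem_toQ {p : Submodule (MonoidAlgebra (ULift.{v} ℚ) G) (MA ρ)} {x : V} :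
    x ∈ toQ ρ p ↔ (x : MA ρ) ∈ p := Iff.rfl

lemma mem_toA {W : Submodule ℚ V} {hW} {x : MA ρ} :
    x ∈ toA ρ W hW ↔ (x : V) ∈ W := Iff.rfl

lemma toQ_toA (W : Submodule ℚ V) (hW) : toQ ρ (toA ρ W hW) = W := rfl

lemma toQ_mono : Monotone (toQ ρ) := fun _ _ h _ hx => h hx

lemma toQ_injective : Function.Injective (toQ ρ) := by
  intro p q h
  ext x
  constructor
  · intro hx; exact (h ▸ (mem_toQ (x := x)).2 hx : x ∈ toQ ρ q)
  · intro hx; exact (h ▸ (mem_toQ (x := x)).2 hx : x ∈ toQ ρ p)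

lemma toQ_bot : toQ ρ (⊥ : Submodule (MonoidAlgebra (ULift.{v} ℚ) G) (MA ρ)) = ⊥ := by
  ext x; simp [mem_toQ, Submodule.mem_bot]; exact Submodule.mem_bot (M := MA ρ) _

lemma toQ_top : toQ ρ (⊤ : Submodule (MonoidAlgebra (ULift.{v} ℚ) G) (MA ρ)) = ⊤ := by
  ext x; simp [mem_toQ, Submodule.mem_top]; exact Submodule.mem_top (M := MA ρ) (R := MonoidAlgebra (ULift.{v} ℚ) G)

lemma toQ_inf (p q : Submodule (MonoidAlgebra (ULift.{v} ℚ) G) (MA ρ)) :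
    toQ ρ (p ⊓ q) = toQ ρ p ⊓ toQ ρ q := rfl

lemma toQ_invariant (p : Submodule (MonoidAlgebra (ULift.{v} ℚ) G) (MA ρ)) :
    ∀ g : G, ∀ x ∈ toQ ρ p, ρ g x ∈ toQ ρ p := by
  intro g x hx
  have := p.smul_mem (MonoidAlgebra.single g (1 : ULift.{v} ℚ)) hx
  exact (rho_smul ρ g x) ▸ this

lemma le_toA_iff {p : Submodule (MonoidAlgebra (ULift.{v} ℚ) G) (MA ρ)} {W : Submodule ℚ V} {hW} :
    p ≤ toA ρ W hW ↔ toQ ρ p ≤ W := Iff.rfl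

lemma toA_le_iff {p : Submodule (MonoidAlgebra (ULift.{v} ℚ) G) (MA ρ)} {W : Submodule ℚ V} {hW} :
    toA ρ W hW ≤ p ↔ W ≤ toQ ρ p := Iff.rfl

lemma invariant_sSup (S : Set (Submodule ℚ V))
    (hS : ∀ W ∈ S, ∀ g : G, ∀ x ∈ W, ρ g x ∈ W) :
    ∀ g : G, ∀ x ∈ sSup S, ρ g x ∈ sSup S := by
  intro g x hx
  have key : sSup S ≤ (sSup S).comap (ρ g) := by
    refine sSup_le fun W hW => le_trans ?_ (Submodule.comap_mono (le_sSup hW))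
    intro y hy
    exact hS W hW g y hy
  exact key hx

lemma toQ_sSup (T : Set (Submodule (MonoidAlgebra (ULift.{v} ℚ) G) (MA ρ))) :
    toQ ρ (sSup T) = sSup (toQ ρ '' T) := by
  apply le_antisymm
  · have hinv : ∀ g : G, ∀ x ∈ sSup (toQ ρ '' T), ρ g x ∈ sSup (toQ ρ '' T) :=
      invariant_sSup _ (by rintro W ⟨p, hp, rfl⟩; exact toQ_invariant p)
    have : sSup T ≤ toA ρ (sSup (toQ ρ '' T)) hinv :=
      sSup_le fun p hp => le_toA_iff.2 (le_sSup ⟨p, hp, rfl⟩)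
    exact toQ_mono this
  · exact sSup_le (by rintro W ⟨p, hp, rfl⟩; exact toQ_mono (le_sSup hp))

lemma toQ_sup (p q : Submodule (MonoidAlgebra (ULift.{v} ℚ) G) (MA ρ)) :
    toQ ρ (p ⊔ q) = toQ ρ p ⊔ toQ ρ q := by
  rw [← sSup_pair, toQ_sSup, Set.image_pair, sSup_pair]

variable (ρ)

/-- the fixed subspace of a subgroup -/
def fixQ (H : Subgroup G) : Submodule ℚ V where
  carrier := {v : V | ∀ h ∈ H, ρ h v = v}
  zero_mem' := fun h _ => map_zero (ρ h)
  add_mem' := fun ha hb h hh => by rw [map_add, ha h hh, hb h hh]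
  smul_mem' := fun q x hx h hh => by rw [map_smul, hx h hh]

lemma fixQ_invariant (H : Subgroup G) (hH : H.Normal) :
    ∀ g : G, ∀ x ∈ fixQ ρ H, ρ g x ∈ fixQ ρ H := by
  intro g x hx h hh
  have hconj : g⁻¹ * h * g ∈ H := by simpa using hH.conj_mem h hh g⁻¹
  have hmul : h * g = g * (g⁻¹ * h * g) := by group
  calc ρ h (ρ g x) = ρ (h * g) x := by rw [map_mul, Module.End.mul_apply]
    _ = ρ g (ρ (g⁻¹ * h * g) x) := by rw [hmul, map_mul, Module.End.mul_apply]
    _ = ρ g x := by rw [hx _ hconj]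

/-- the subgroup fixing a group-algebra submodule pointwise -/
def fixer (p : Submodule (MonoidAlgebra (ULift.{v} ℚ) G) (MA ρ)) : Subgroup G where
  carrier := {g : G | ∀ x ∈ toQ ρ p, ρ g x = x}
  one_mem' := fun x _ => by rw [ρ.map_one]; rfl
  mul_mem' := by
    intro a b ha hb x hx
    rw [map_mul, Module.End.mul_apply, hb x hx, ha x hx]
  inv_mem' := by
    intro a ha x hx
    calc ρ a⁻¹ x = ρ a⁻¹ (ρ a x) := by rw [ha x hx]
      _ = ρ (a⁻¹ * a) x := by rw [map_mul, Module.End.mul_apply]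
      _ = x := by rw [inv_mul_cancel, ρ.map_one]; rfl

lemma fixer_normal (p : Submodule (MonoidAlgebra (ULift.{v} ℚ) G) (MA ρ)) :
    (fixer ρ p).Normal := by
  constructor
  intro h hh g x hx
  have h1 : ρ g⁻¹ x ∈ toQ ρ p := toQ_invariant p g⁻¹ x hx
  calc ρ (g * h * g⁻¹) x = ρ g (ρ h (ρ g⁻¹ x)) := by
        rw [map_mul, map_mul, Module.End.mul_apply, Module.End.mul_apply]
    _ = ρ g (ρ g⁻¹ x) := by rw [hh _ h1]
    _ = ρ (g * g⁻¹) x := by rw [map_mul, Module.End.mul_apply]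
    _ = x := by rw [mul_inv_cancel, ρ.map_one]; rfl

variable {ρ}

lemma exists_proj [Fintype G] [NeZero ((Fintype.card G : ULift.{v} ℚ))]
    (S : Submodule (MonoidAlgebra (ULift.{v} ℚ) G) (MA ρ)) (hS : S ≠ ⊥)
    (T : Set (Submodule (MonoidAlgebra (ULift.{v} ℚ) G) (MA ρ))) (hle : S ≤ sSup T) :
    ∃ p ∈ T, ∃ f : MA ρ →ₗ[MonoidAlgebra (ULift.{v} ℚ) G] ↥S, ∃ x ∈ p, f x ≠ 0 := by
  haveI : NeZero ((Nat.card G : ULift.{v} ℚ)) := by rw [Nat.card_eq_fintype_card]; infer_instance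
  obtain ⟨C, hC⟩ := ComplementedLattice.exists_isCompl S
  set f := S.projectionOnto C hC with hfdef
  by_contra hcon
  push_neg at hcon
  have hker : sSup T ≤ LinearMap.ker f :=
    sSup_le fun p hp => fun x hx => LinearMap.mem_ker.2 (hcon p hp f x hx)
  obtain ⟨x, hxS, hx0⟩ := Submodule.ne_bot_iff S |>.1 hS
  have h0 : f x = 0 := hker (hle hxS)
  have h1 : f x = ⟨x, hxS⟩ := Submodule.projectionOnto_apply_left hC ⟨x, hxS⟩
  rw [h0] at h1
  exact hx0 (by simpa using congrArg Subtype.val h1.symm)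

lemma coe_smul_sub {p : Submodule (MonoidAlgebra (ULift.{v} ℚ) G) (MA ρ)}
    (a : MonoidAlgebra (ULift.{v} ℚ) G) (s : p) :
    ((a • s : p) : MA ρ) = a • (s : MA ρ) := rfl

/-- faithfulness transfers along a nonzero map from a faithful simple module -/
lemma faithful_transfer {S p : Submodule (MonoidAlgebra (ULift.{v} ℚ) G) (MA ρ)}
    (hSs : IsSimpleModule (MonoidAlgebra (ULift.{v} ℚ) G) S)
    (hps : IsSimpleModule (MonoidAlgebra (ULift.{v} ℚ) G) p)
    (f : MA ρ →ₗ[MonoidAlgebra (ULift.{v} ℚ) G] S)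
    (x : MA ρ) (hxp : x ∈ p) (hfx : f x ≠ 0)
    (hpfaith : ∀ g : G, g ≠ 1 → ∃ w ∈ toQ ρ p, ρ g w ≠ w) :
    ∀ g : G, g ≠ 1 → ∃ w ∈ toQ ρ S, ρ g w ≠ w := by
  haveI := hSs; haveI := hps
  set φ : p →ₗ[MonoidAlgebra (ULift.{v} ℚ) G] S := f ∘ₗ p.subtype with hφdef
  have hφ : φ ≠ 0 := by
    intro h
    apply hfx
    have := congrArg (fun m => m ⟨x, hxp⟩) h
    simpa [hφdef] using this
  have hbij : Function.Bijective φ := LinearMap.bijective_of_ne_zero (R := MonoidAlgebra (ULift.{v} ℚ) G) (M := p) (N := S) (f := φ) (fun h => hφ (LinearMap.ext fun z => LinearMap.congr_fun h z))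
  intro g hg
  obtain ⟨y, hyp, hy⟩ := hpfaith g hg
  refine ⟨((φ ⟨y, hyp⟩ : S) : MA ρ), (φ ⟨y, hyp⟩).2, ?_⟩
  intro hEq
  apply hy
  have e1 : (MonoidAlgebra.single g (1 : ULift.{v} ℚ)) • (φ ⟨y, hyp⟩) = φ ⟨y, hyp⟩ := by
    apply Subtype.ext
    rw [coe_smul_sub, rho_smul]
    exact hEq
  have e2 : φ ((MonoidAlgebra.single g (1 : ULift.{v} ℚ)) • ⟨y, hyp⟩) = φ ⟨y, hyp⟩ := by
    rw [map_smul, e1]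
  have e3 := hbij.1 e2
  have e4 := congrArg Subtype.val e3
  rw [coe_smul_sub, rho_smul] at e4
  exact e4

/-- a simple module receiving a nonzero map from an `H`-fixed module is `H`-fixed -/
lemma fixed_transfer {S : Submodule (MonoidAlgebra (ULift.{v} ℚ) G) (MA ρ)}
    (hatom : IsAtom S) {H : Subgroup G} (hHnorm : H.Normal)
    (f' : MA ρ →ₗ[MonoidAlgebra (ULift.{v} ℚ) G] S)
    (x' : MA ρ) (hx' : ∀ h ∈ H, ρ h (x' : V) = x') (hfx' : f' x' ≠ 0) :
    ∀ h ∈ H, ∀ w ∈ toQ ρ S, ρ h w = w := by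
  set y : MA ρ := ((f' x' : S) : MA ρ) with hydef
  have hymem : y ∈ S := (f' x').2
  have hy0 : y ≠ 0 := fun h => hfx' (Subtype.ext h)
  have hyfix : ∀ h ∈ H, ρ h (y : V) = y := by
    intro h hh
    have hx'fix : (MonoidAlgebra.single h (1 : ULift.{v} ℚ)) • x' = x' := by
      rw [rho_smul]; exact hx' h hh
    exact (rho_smul ρ h y).symm.trans ((coe_smul_sub _ _).symm.trans (by rw [← map_smul, hx'fix]))
  have hspan : Submodule.span (MonoidAlgebra (ULift.{v} ℚ) G) {y} = S := by
    have hle' : Submodule.span (MonoidAlgebra (ULift.{v} ℚ) G) {y} ≤ S :=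
      Submodule.span_le.2 (Set.singleton_subset_iff.2 hymem)
    rcases hle'.lt_or_eq with hlt | heq
    · exact absurd (Submodule.span_singleton_eq_bot.1 (hatom.2 _ hlt)) hy0
    · exact heq
  have key : ∀ h ∈ H, ∀ a : MonoidAlgebra (ULift.{v} ℚ) G,
      ((MonoidAlgebra.single h (1 : ULift.{v} ℚ)) * a) • y = a • y := by
    intro h hh a
    induction a using MonoidAlgebra.induction_linear with
    | zero => rw [mul_zero]
    | add f g hf hg => rw [mul_add, add_smul, add_smul, hf, hg]
    | single g c =>
      rw [MonoidAlgebra.single_mul_single, one_mul, single_smul, single_smul]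
      congr 1
      have hconj : g⁻¹ * h * g ∈ H := by simpa using hHnorm.conj_mem h hh g⁻¹
      have hmul : h * g = g * (g⁻¹ * h * g) := by group
      calc ρ (h * g) (y : V) = ρ g (ρ (g⁻¹ * h * g) (y : V)) := by
            rw [hmul, map_mul]; rfl
        _ = ρ g (y : V) := by rw [hyfix _ hconj]
  intro h hh w hwS
  have hw' : (w : MA ρ) ∈ S := hwS
  rw [← hspan] at hw'
  obtain ⟨a, ha⟩ := (Submodule.mem_span_singleton (R := MonoidAlgebra (ULift.{v} ℚ) G)
    (M := MA ρ) (x := w) (y := y)).1 hw'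
  have h2 : (MonoidAlgebra.single h (1 : ULift.{v} ℚ)) • (a • y) = a • y := by
    rw [← mul_smul, key h hh a]
  rw [ha] at h2
  exact (rho_smul ρ h w).symm.trans h2

end Stmt12Aux

open Stmt12Aux in
/-- (Abstract form of Proposition 2.3.) Let `G` be a finite group (e.g. `Gal(K/F)`) and
`V` a finite-dimensional `ℚ`-representation of `G` (e.g. `E(K) ⊗ ℚ`). Let `V^new` be the
sum of the isotypic components of the faithful irreducible `ℚ`-representations of `G`,
realized as the sum of all faithful simple `G`-submodules of `V`, and let `N` be the span
of the fixed subspaces `V^H` over all non-trivial normal subgroups `H ⊴ G` (these fixed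
spaces are exactly the `E(L) ⊗ ℚ` for proper Galois subextensions `L/F`). Then the kernel
of the projection `V → V^new` equals `N`; i.e. `V = N ⊕ V^new`, so
`E(K/F)^{G-new} ⊗ ℚ = V/N ≅ V^new`. -/
theorem stmt_12 {V : Type*} [AddCommGroup V] [Module ℚ V] [FiniteDimensional ℚ V]
    {G : Type*} [Group G] [Finite G] (ρ : Representation ℚ G V)
    (N : Submodule ℚ V)
    (hN : N = Submodule.span ℚ
      (⋃ H ∈ {H : Subgroup G | H.Normal ∧ H ≠ ⊥}, {v : V | ∀ h ∈ H, ρ h v = v}))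
    (Vnew : Submodule ℚ V)
    (hVnew : Vnew = sSup {W : Submodule ℚ V |
      (∀ g : G, ∀ x ∈ W, ρ g x ∈ W) ∧ W ≠ ⊥ ∧
      (∀ U : Submodule ℚ V, U ≤ W → (∀ g : G, ∀ x ∈ U, ρ g x ∈ U) → U = ⊥ ∨ U = W) ∧
      (∀ g : G, g ≠ 1 → ∃ x ∈ W, ρ g x ≠ x)}) :
    N ⊓ Vnew = ⊥ ∧ N ⊔ Vnew = ⊤ ∧
    Nonempty ((V ⧸ N) ≃ₗ[ℚ] Vnew) := by
  classical
  haveI : Fintype G := Fintype.ofFinite G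
  haveI : CharZero (ULift ℚ) := ⟨fun m n h => by
    have := congrArg ULift.down h
    rwa [ULift.down_natCast, ULift.down_natCast, Nat.cast_inj] at this⟩
  haveI : NeZero ((Fintype.card G : ULift ℚ)) := ⟨Nat.cast_ne_zero.2 Fintype.card_ne_zero⟩
  haveI : IsSemisimpleRing (MonoidAlgebra (ULift ℚ) G) := inferInstance
  -- the set of "old" pieces
  set TN : Set (Submodule (MonoidAlgebra (ULift ℚ) G) (MA ρ)) :=
    {p | ∃ H : Subgroup G, ∃ hH : H.Normal ∧ H ≠ ⊥,
      p = toA ρ (fixQ ρ H) (fixQ_invariant ρ H hH.1)} with hTN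
  -- the set of faithful simple submodules
  set Sf : Set (Submodule (MonoidAlgebra (ULift ℚ) G) (MA ρ)) :=
    {S | IsAtom S ∧ ∀ g : G, g ≠ 1 → ∃ x ∈ toQ ρ S, ρ g x ≠ x} with hSf
  -- identify N
  have hNA : N = toQ ρ (sSup TN) := by
    rw [toQ_sSup, hN]
    apply le_antisymm
    · rw [Submodule.span_le]
      intro v hv
      simp only [Set.mem_iUnion] at hv
      obtain ⟨H, hH, hv⟩ := hv
      have hmem : fixQ ρ H ∈ toQ ρ '' TN :=
        ⟨toA ρ (fixQ ρ H) (fixQ_invariant ρ H hH.1), ⟨H, hH, rfl⟩, toQ_toA _ _⟩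
      exact le_sSup hmem (show v ∈ fixQ ρ H from hv)
    · apply sSup_le
      rintro W ⟨p, ⟨H, hH, rfl⟩, rfl⟩
      rw [toQ_toA]
      intro v hv
      exact Submodule.subset_span (Set.mem_iUnion₂.2 ⟨H, hH, hv⟩)
  -- identify Vnew
  have hVA : Vnew = toQ ρ (sSup Sf) := by
    rw [toQ_sSup, hVnew]
    congr 1
    ext W
    constructor
    · rintro ⟨hinv, hne, hmin, hfaith⟩
      refine ⟨toA ρ W hinv, ⟨⟨?_, ?_⟩, ?_⟩, toQ_toA _ _⟩
      · intro h
        exact hne (by rw [← toQ_toA W hinv, h, toQ_bot])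
      · intro p hp
        rcases hmin (toQ ρ p) (toQ_mono hp.le) (toQ_invariant p) with h | h
        · exact toQ_injective (by rw [h, toQ_bot])
        · exact absurd (toQ_injective (by rw [h, toQ_toA])) hp.ne
      · intro g hg
        rw [toQ_toA]
        exact hfaith g hg
    · rintro ⟨S, ⟨hatom, hfaith⟩, rfl⟩
      refine ⟨toQ_invariant S, ?_, ?_, hfaith⟩
      · intro h
        exact hatom.1 (toQ_injective (by rw [h, toQ_bot]))
      · intro U hU hUinv
        by_cases hUS : toA ρ U hUinv = S
        · right; rw [← toQ_toA U hUinv, hUS]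
        · left
          have h1 : toA ρ U hUinv ≤ S := toA_le_iff.2 hU
          have h2 := hatom.2 _ (lt_of_le_of_ne h1 hUS)
          rw [← toQ_toA U hUinv, h2, toQ_bot]
  -- sum is everything
  have hsum : sSup TN ⊔ sSup Sf = ⊤ := by
    rw [eq_top_iff, ← IsSemisimpleModule.sSup_simples_eq_top (MonoidAlgebra (ULift ℚ) G) (MA ρ)]
    apply sSup_le
    rintro S (hS : IsSimpleModule _ S)
    have hatom : IsAtom S := isSimpleModule_iff_isAtom.1 hS
    by_cases hfaith : ∀ g : G, g ≠ 1 → ∃ x ∈ toQ ρ S, ρ g x ≠ x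
    · exact le_sup_of_le_right (le_sSup ⟨hatom, hfaith⟩)
    · push_neg at hfaith
      obtain ⟨g, hg1, hgfix⟩ := hfaith
      have hfne : fixer ρ S ≠ ⊥ := fun hbot =>
        hg1 (Subgroup.mem_bot.1 (hbot ▸ (hgfix : g ∈ fixer ρ S)))
      have hmem : toA ρ (fixQ ρ (fixer ρ S)) (fixQ_invariant ρ _ (fixer_normal ρ S)) ∈ TN :=
        ⟨fixer ρ S, ⟨fixer_normal ρ S, hfne⟩, rfl⟩
      have hles : S ≤ toA ρ (fixQ ρ (fixer ρ S)) (fixQ_invariant ρ _ (fixer_normal ρ S)) :=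
        fun x hx h hh => hh x hx
      exact le_sup_of_le_left (hles.trans (le_sSup hmem))
  -- intersection is trivial
  have hdisj : sSup TN ⊓ sSup Sf = ⊥ := by
    rcases IsSemisimpleModule.eq_bot_or_exists_simple_le (sSup TN ⊓ sSup Sf) with h | ⟨S, hle, hS⟩
    · exact h
    exfalso
    haveI hSsimple : IsSimpleModule (MonoidAlgebra (ULift ℚ) G) S := hS
    have hatom : IsAtom S := isSimpleModule_iff_isAtom.1 hS
    have hSN : S ≤ sSup TN := hle.trans inf_le_left
    have hSV : S ≤ sSup Sf := hle.trans inf_le_right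
    -- S is faithful, since it embeds in a faithful simple module
    obtain ⟨p, hpSf, f, x, hxp, hfx⟩ := exists_proj S hatom.1 Sf hSV
    have hSfaith : ∀ g : G, g ≠ 1 → ∃ w ∈ toQ ρ S, ρ g w ≠ w :=
      faithful_transfer hSsimple (isSimpleModule_iff_isAtom.2 hpSf.1) f x hxp hfx hpSf.2
    -- S is fixed pointwise by a nontrivial normal subgroup
    obtain ⟨pN, hpN, f', x', hx'p, hfx'⟩ := exists_proj S hatom.1 TN hSN
    obtain ⟨H, ⟨hHnorm, hHne⟩, rfl⟩ := hpN
    have hfix : ∀ h ∈ H, ∀ w ∈ toQ ρ S, ρ h w = w :=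
      fixed_transfer hatom hHnorm f' x' (fun h hh => hx'p h hh) hfx'
    obtain ⟨h0, hh0H, hh01⟩ : ∃ h ∈ H, h ≠ 1 := by
      rcases H.bot_or_exists_ne_one with h | h
      · exact absurd h hHne
      · exact h
    obtain ⟨w, hwS, hw⟩ := hSfaith h0 hh01
    exact hw (hfix h0 hh0H w hwS)
  -- assemble
  have h1 : N ⊓ Vnew = ⊥ := by
    rw [hNA, hVA, ← toQ_inf, hdisj, toQ_bot]
  have h2 : N ⊔ Vnew = ⊤ := by
    rw [hNA, hVA, ← toQ_sup, hsum, toQ_top]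
  refine ⟨h1, h2, ⟨Submodule.quotientEquivOfIsCompl N Vnew ⟨disjoint_iff.2 h1, codisjoint_iff.2 h2⟩⟩⟩
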